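/- Let a, b ∈ ℂ with a ≠ b, let λ ∈ ℂ ∖ {0}, and set A = P(a, b). For every z ∈ ℂ with z ∉ {a, b}, writing (p, s)ᵀ = (I − λ⁻¹·A)·(z, 1)ᵀ, one has (z − a)·(b·s − p) = λ·(a − b)·(p − z·s). That is, in homogeneous coordinates the matrix T^λ = I − λ⁻¹·A represents the Möbius transformation sending z to the unique point w with cross-ratio [z : a : b : w] = λ. -/
import Mathlib


open Matrix

/-- For distinct `u w : ℂ`, `Pmat u w = (w − u)⁻¹ • [[w, −u·w], [1, −u]]` is the unique
idempotent 2×2 matrix with kernel spanned by `(u, 1)ᵀ` and image spanned by `(w, 1)ᵀ`. -/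
noncomputable def Pmat (u w : ℂ) : Matrix (Fin 2) (Fin 2) ℂ :=
  (w - u)⁻¹ • !![w, -(u * w); 1, -u]

/-- For `a ≠ b`, `λ ≠ 0` and `z ∉ {a, b}`, writing `(p, s)ᵀ = (I − λ⁻¹·P(a,b))·(z, 1)ᵀ`,
one has `(z − a)·(b·s − p) = λ·(a − b)·(p − z·s)`: in homogeneous coordinates the matrix
`T^λ = I − λ⁻¹·P(a,b)` represents the Möbius transformation sending `z` to the unique
point `w` with cross-ratio `[z : a : b : w] = λ`. -/
theorem edgeMatrix_crossRatio (a b lam z : ℂ) (hab : a ≠ b) (hlam : lam ≠ 0)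
    (hza : z ≠ a) (hzb : z ≠ b) (p s : ℂ)
    (hps : ![p, s] = ((1 : Matrix (Fin 2) (Fin 2) ℂ) - lam⁻¹ • Pmat a b) *ᵥ ![z, 1]) :
    (z - a) * (b * s - p) = lam * (a - b) * (p - z * s) := by
  have hp := congrFun hps 0
  have hs := congrFun hps 1
  simp [Pmat, mulVec, dotProduct, Fin.sum_univ_two, Matrix.sub_apply,
    Matrix.one_apply, Matrix.smul_apply] at hp hs
  have hba : b - a ≠ 0 := sub_ne_zero.mpr (Ne.symm hab)
  subst hp hs
  field_simp
  ring
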